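/- arXiv:2006.11818 — 2 statements merged into one kernel-verified Lean document; each statement's English description precedes it below -/
import Mathlib

section
/- Let $\mu$ be a probability measure on $\mathbb{R}$ with distribution function $F$, let $p\ge 1$, and let $\psi:\mathbb{R}\to[0,\infty)$ be measurable. Then $\int_{\mathbb{R}}\left(\int_{[x,\infty)}\frac{\psi(y)}{F(y)}\,d\mu(y)\right)^p d\mu(x) \le p^p \int_{\mathbb{R}}\psi^p\,d\mu$. -/
open MeasureTheory Set ENNReal

/-- The measure of an upper set is at most `c` if each `Ici y` with `y` in the set has
measure at most `c`. -/
lemma measure_upperSet_le (ν : Measure ℝ) {S : Set ℝ}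
    (hup : ∀ ⦃x y : ℝ⦄, x ∈ S → x ≤ y → y ∈ S) {c : ℝ≥0∞}
    (h : ∀ y ∈ S, ν (Ici y) ≤ c) : ν S ≤ c := by
  rcases eq_empty_or_nonempty S with rfl | hne
  · simp
  by_cases hbdd : BddBelow S
  · set b := sInf S with hb
    by_cases hbS : b ∈ S
    · exact le_trans (measure_mono fun s hs => csInf_le hbdd hs) (h b hbS)
    · have hmem : ∀ n : ℕ, b + 1/(n+1) ∈ S := by
        intro n
        have hlt : b < b + 1/(n+1) := by
          have : (0:ℝ) < 1/(n+1) := by positivity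
          linarith
        obtain ⟨s, hsS, hs⟩ := exists_lt_of_csInf_lt hne hlt
        exact hup hsS hs.le
      have hmono : Monotone fun n : ℕ => Ici (b + 1/(n+1)) := by
        intro m n hmn
        apply Ici_subset_Ici.2
        have h1 : (1:ℝ)/(n+1) ≤ 1/(m+1) := by
          apply one_div_le_one_div_of_le (by positivity)
          have := (Nat.cast_le (α := ℝ)).2 hmn; linarith
        linarith
      have hsub : S ⊆ ⋃ n : ℕ, Ici (b + 1/(n+1)) := by
        intro s hs
        have hbs : b < s := lt_of_le_of_ne (csInf_le hbdd hs) (by rintro rfl; exact hbS hs)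
        obtain ⟨n, hn⟩ := exists_nat_one_div_lt (sub_pos.2 hbs)
        exact mem_iUnion.2 ⟨n, by simp only [mem_Ici]; linarith⟩
      calc ν S ≤ ν (⋃ n : ℕ, Ici (b + 1/(n+1))) := measure_mono hsub
        _ = ⨆ n : ℕ, ν (Ici (b + 1/(n+1))) := hmono.directed_le.measure_iUnion
        _ ≤ c := iSup_le fun n => h _ (hmem n)
  · have hmem : ∀ n : ℕ, (-(n:ℝ)) ∈ S := by
      intro n
      obtain ⟨s, hsS, hs⟩ := not_bddBelow_iff.mp hbdd (-(n:ℝ))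
      exact hup hsS hs.le
    have hmono : Monotone fun n : ℕ => Ici (-(n:ℝ)) := by
      intro m n hmn
      exact Ici_subset_Ici.2 (by exact_mod_cast neg_le_neg (Nat.cast_le.2 hmn))
    have hsub : S ⊆ ⋃ n : ℕ, Ici (-(n:ℝ)) := by
      intro s _
      obtain ⟨n, hn⟩ := exists_nat_ge (-s)
      exact mem_iUnion.2 ⟨n, by simp only [mem_Ici]; linarith⟩
    calc ν S ≤ ν (⋃ n : ℕ, Ici (-(n:ℝ))) := measure_mono hsub
      _ = ⨆ n : ℕ, ν (Ici (-(n:ℝ))) := hmono.directed_le.measure_iUnion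
      _ ≤ c := iSup_le fun n => h _ (hmem n)

/-- dual version for lower sets. -/
lemma measure_lowerSet_le (ν : Measure ℝ) {S : Set ℝ}
    (hlo : ∀ ⦃x y : ℝ⦄, x ∈ S → y ≤ x → y ∈ S) {c : ℝ≥0∞}
    (h : ∀ y ∈ S, ν (Iic y) ≤ c) : ν S ≤ c := by
  rcases eq_empty_or_nonempty S with rfl | hne
  · simp
  by_cases hbdd : BddAbove S
  · set b := sSup S with hb
    by_cases hbS : b ∈ S
    · exact le_trans (measure_mono fun s hs => le_csSup hbdd hs) (h b hbS)
    · have hmem : ∀ n : ℕ, b - 1/(n+1) ∈ S := by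
        intro n
        have hlt : b - 1/(n+1) < b := by
          have : (0:ℝ) < 1/(n+1) := by positivity
          linarith
        obtain ⟨s, hsS, hs⟩ := exists_lt_of_lt_csSup hne hlt
        exact hlo hsS hs.le
      have hmono : Monotone fun n : ℕ => Iic (b - 1/(n+1)) := by
        intro m n hmn
        apply Iic_subset_Iic.2
        have h1 : (1:ℝ)/(n+1) ≤ 1/(m+1) := by
          apply one_div_le_one_div_of_le (by positivity)
          have := (Nat.cast_le (α := ℝ)).2 hmn; linarith
        linarith
      have hsub : S ⊆ ⋃ n : ℕ, Iic (b - 1/(n+1)) := by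
        intro s hs
        have hbs : s < b := lt_of_le_of_ne (le_csSup hbdd hs) (by rintro rfl; exact hbS hs)
        obtain ⟨n, hn⟩ := exists_nat_one_div_lt (sub_pos.2 hbs)
        exact mem_iUnion.2 ⟨n, by simp only [mem_Iic]; linarith⟩
      calc ν S ≤ ν (⋃ n : ℕ, Iic (b - 1/(n+1))) := measure_mono hsub
        _ = ⨆ n : ℕ, ν (Iic (b - 1/(n+1))) := hmono.directed_le.measure_iUnion
        _ ≤ c := iSup_le fun n => h _ (hmem n)
  · have hmem : ∀ n : ℕ, ((n:ℝ)) ∈ S := by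
      intro n
      obtain ⟨s, hsS, hs⟩ := not_bddAbove_iff.mp hbdd (n:ℝ)
      exact hlo hsS hs.le
    have hsub : S ⊆ ⋃ n : ℕ, Iic ((n:ℝ)) := by
      intro s _
      obtain ⟨n, hn⟩ := exists_nat_ge s
      exact mem_iUnion.2 ⟨n, by simp only [mem_Iic]; linarith⟩
    have hmono : Monotone fun n : ℕ => Iic ((n:ℝ)) := by
      intro m n hmn
      exact Iic_subset_Iic.2 (by exact_mod_cast Nat.cast_le.2 hmn)
    calc ν S ≤ ν (⋃ n : ℕ, Iic ((n:ℝ))) := measure_mono hsub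
      _ = ⨆ n : ℕ, ν (Iic ((n:ℝ))) := hmono.directed_le.measure_iUnion
      _ ≤ c := iSup_le fun n => h _ (hmem n)

lemma tail_rpow_lintegral_ge (ν : Measure ℝ) [IsFiniteMeasure ν] {q : ℝ} (hq : 0 < q) :
    ν univ ^ (q + 1) ≤ ENNReal.ofReal (q + 1) * ∫⁻ y, ν (Ici y) ^ q ∂ν := by
  set a' : ℝ := (ν univ).toReal with ha'
  have ha'nn : 0 ≤ a' := ENNReal.toReal_nonneg
  set f : ℝ → ℝ := fun y => (ν (Ici y)).toReal with hfdef
  have hf_anti : Antitone f := fun x y hxy =>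
    ENNReal.toReal_le_toReal (measure_ne_top _ _) (measure_ne_top _ _) |>.2
      (measure_mono (Ici_subset_Ici.2 hxy))
  have hf_meas : Measurable f := hf_anti.measurable
  have step1 : ∫⁻ y, ν (Ici y) ^ q ∂ν = ∫⁻ y, ENNReal.ofReal (f y ^ q) ∂ν := by
    refine lintegral_congr fun y => ?_
    rw [ENNReal.toReal_rpow, ENNReal.ofReal_toReal]
    exact ENNReal.rpow_ne_top_of_nonneg hq.le (measure_ne_top _ _)
  have layer := lintegral_rpow_eq_lintegral_meas_le_mul ν
    (Filter.Eventually.of_forall fun y => ENNReal.toReal_nonneg) hf_meas.aemeasurable hq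
  -- key pointwise bound
  have key : ∀ t : ℝ, 0 < t → ν univ - ENNReal.ofReal t ≤ ν {a : ℝ | t ≤ f a} := by
    intro t ht
    have hcompl : ν {y : ℝ | f y < t} ≤ ENNReal.ofReal t := by
      refine measure_upperSet_le ν (fun x y hx hxy => lt_of_le_of_lt (hf_anti hxy) hx) ?_
      intro y hy
      exact le_of_lt ((ENNReal.lt_ofReal_iff_toReal_lt (measure_ne_top _ _)).2 hy)
    have hsplit : ν univ ≤ ν {a : ℝ | t ≤ f a} + ENNReal.ofReal t := by
      calc ν univ ≤ ν ({a : ℝ | t ≤ f a} ∪ {y : ℝ | f y < t}) :=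
            measure_mono fun y _ => (le_or_gt t (f y)).imp id id
        _ ≤ ν {a : ℝ | t ≤ f a} + ν {y : ℝ | f y < t} := measure_union_le _ _
        _ ≤ _ := add_le_add_right hcompl _
    exact tsub_le_iff_right.2 hsplit
  -- lower bound the layer-cake integral
  have hIoo : ∫⁻ t in Ioo 0 a', (ν univ - ENNReal.ofReal t) * ENNReal.ofReal (t ^ (q - 1)) ∂volume
      ≤ ∫⁻ t in Ioi 0, ν {a : ℝ | t ≤ f a} * ENNReal.ofReal (t ^ (q - 1)) ∂volume := by
    refine le_trans ?_ (lintegral_mono_set (Ioo_subset_Ioi_self : Ioo (0:ℝ) a' ⊆ Ioi 0))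
    refine setLIntegral_mono' measurableSet_Ioo fun t ht => ?_
    exact mul_le_mul_left (key t ht.1) _
  -- compute the explicit integral
  have hcongr : ∫⁻ t in Ioo 0 a', (ν univ - ENNReal.ofReal t) * ENNReal.ofReal (t ^ (q - 1)) ∂volume
      = ∫⁻ t in Ioo 0 a', ENNReal.ofReal ((a' - t) * t ^ (q - 1)) ∂volume := by
    refine setLIntegral_congr_fun measurableSet_Ioo (fun t ht => ?_)
    have h1 : ν univ = ENNReal.ofReal a' := (ENNReal.ofReal_toReal (measure_ne_top _ _)).symm
    rw [h1, ← ENNReal.ofReal_sub _ ht.1.le, ← ENNReal.ofReal_mul (by linarith [ht.2])]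
  have hint : IntegrableOn (fun t : ℝ => (a' - t) * t ^ (q - 1)) (Ioo 0 a') volume := by
    have h1 : IntervalIntegrable (fun t : ℝ => t ^ (q - 1)) volume 0 a' :=
      intervalIntegral.intervalIntegrable_rpow' (by linarith)
    have h2 : IntervalIntegrable (fun t : ℝ => t ^ q) volume 0 a' :=
      intervalIntegral.intervalIntegrable_rpow' (by linarith)
    have h3 : IntervalIntegrable (fun t : ℝ => a' * t ^ (q - 1) - t ^ q) volume 0 a' :=
      (h1.const_mul a').sub h2
    have h4 : IntegrableOn (fun t : ℝ => a' * t ^ (q - 1) - t ^ q) (Ioo 0 a') volume :=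
      ((intervalIntegrable_iff_integrableOn_Ioc_of_le ha'nn).1 h3).mono_set Ioo_subset_Ioc_self
    refine h4.congr_fun (fun t ht => ?_) measurableSet_Ioo
    have h := Real.rpow_add ht.1 1 (q - 1)
    rw [Real.rpow_one] at h
    have hq' : 1 + (q - 1) = q := by ring
    rw [hq'] at h
    rw [sub_mul]; beta_reduce; rw [h]
  have hval : ∫ t in Ioo 0 a', (a' - t) * t ^ (q - 1) = a' ^ (q + 1) / (q * (q + 1)) := by
    rcases eq_or_lt_of_le ha'nn with h0 | ha'pos
    · rw [← h0]
      simp [Real.zero_rpow (by positivity : q + 1 ≠ 0)]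
    have heqon : EqOn (fun t : ℝ => (a' - t) * t ^ (q - 1))
        (fun t : ℝ => a' * t ^ (q - 1) - t ^ q) (Set.uIcc 0 a') := by
      intro t ht
      rw [Set.uIcc_of_le ha'nn] at ht
      rcases eq_or_lt_of_le ht.1 with h0 | htpos
      · simp only [← h0]
        rcases eq_or_ne q 1 with rfl | hq1
        · norm_num
        · rw [Real.zero_rpow (by intro h; apply hq1; linarith : q - 1 ≠ 0),
            Real.zero_rpow hq.ne']
          ring
      · have h := Real.rpow_add htpos 1 (q - 1)
        rw [Real.rpow_one] at h
        have hq' : 1 + (q - 1) = q := by ring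
        rw [hq'] at h
        simp only []
        rw [sub_mul, h]
    have h1 : IntervalIntegrable (fun t : ℝ => t ^ (q - 1)) volume 0 a' :=
      intervalIntegral.intervalIntegrable_rpow' (by linarith)
    have h2 : IntervalIntegrable (fun t : ℝ => t ^ q) volume 0 a' :=
      intervalIntegral.intervalIntegrable_rpow' (by linarith)
    rw [← integral_Ioc_eq_integral_Ioo, ← intervalIntegral.integral_of_le ha'nn,
      intervalIntegral.integral_congr heqon,
      intervalIntegral.integral_sub (h1.const_mul a') h2,
      intervalIntegral.integral_const_mul, integral_rpow (Or.inl (by linarith : (-1:ℝ) < q - 1)),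
      integral_rpow (Or.inl (by linarith : (-1:ℝ) < q))]
    have e1 : q - 1 + 1 = q := by ring
    rw [e1]
    rw [Real.zero_rpow hq.ne', Real.zero_rpow (by positivity : q + 1 ≠ 0)]
    have e2 : a' * a' ^ q = a' ^ (q + 1) := by
      rw [Real.rpow_add ha'pos, Real.rpow_one]; ring
    field_simp
    rw [← e2]; ring
  have hofReal : ∫⁻ t in Ioo 0 a', ENNReal.ofReal ((a' - t) * t ^ (q - 1)) ∂volume
      = ENNReal.ofReal (a' ^ (q + 1) / (q * (q + 1))) := by
    rw [← ofReal_integral_eq_lintegral_ofReal hint ?_, hval]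
    refine (ae_restrict_iff' measurableSet_Ioo).2 (Filter.Eventually.of_forall fun t ht => ?_)
    exact mul_nonneg (by linarith [ht.2]) (Real.rpow_nonneg ht.1.le _)
  -- assemble
  have hfinal : ENNReal.ofReal (a' ^ (q + 1) / (q * (q + 1)))
      ≤ ∫⁻ t in Ioi 0, ν {a : ℝ | t ≤ f a} * ENNReal.ofReal (t ^ (q - 1)) ∂volume := by
    rw [← hofReal, ← hcongr]; exact hIoo
  have huniv : ν univ ^ (q + 1) = ENNReal.ofReal (a' ^ (q + 1)) := by
    rw [← ENNReal.ofReal_rpow_of_nonneg ha'nn (by linarith), ENNReal.ofReal_toReal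
      (measure_ne_top _ _)]
  calc ν univ ^ (q + 1) = ENNReal.ofReal (a' ^ (q + 1)) := huniv
    _ = ENNReal.ofReal ((q + 1) * (q * (a' ^ (q + 1) / (q * (q + 1))))) := by
        congr 1
        field_simp
    _ = ENNReal.ofReal (q + 1) * (ENNReal.ofReal q *
          ENNReal.ofReal (a' ^ (q + 1) / (q * (q + 1)))) := by
        rw [ENNReal.ofReal_mul (by linarith), ENNReal.ofReal_mul hq.le]
    _ ≤ ENNReal.ofReal (q + 1) * (ENNReal.ofReal q *
          ∫⁻ t in Ioi 0, ν {a : ℝ | t ≤ f a} * ENNReal.ofReal (t ^ (q - 1)) ∂volume) := by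
        exact mul_le_mul_right (mul_le_mul_right hfinal _) _
    _ = ENNReal.ofReal (q + 1) * ∫⁻ y, ν (Ici y) ^ q ∂ν := by
        rw [step1, layer]

/-- Key pointwise inequality (Lemma A). -/
lemma lemmaA (μ : Measure ℝ) (g : ℝ → ℝ≥0∞) (hg : Measurable g) {p : ℝ} (hp : 1 ≤ p)
    (x : ℝ) (hfin : ∫⁻ y in Ici x, g y ∂μ ≠ ∞) :
    (∫⁻ y in Ici x, g y ∂μ) ^ p
      ≤ ENNReal.ofReal p * ∫⁻ y in Ici x, g y * (∫⁻ z in Ici y, g z ∂μ) ^ (p - 1) ∂μ := by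
  rcases eq_or_lt_of_le hp with heq | hlt
  · subst heq
    simp only [ENNReal.rpow_one, sub_self, ENNReal.rpow_zero, mul_one, ENNReal.ofReal_one,
      one_mul]
    exact le_refl _
  · set ν : Measure ℝ := (μ.restrict (Ici x)).withDensity g with hν
    have hνuniv : ν univ = ∫⁻ y in Ici x, g y ∂μ := by
      rw [hν, withDensity_apply _ MeasurableSet.univ, setLIntegral_univ]
    haveI : IsFiniteMeasure ν := ⟨by rw [hνuniv]; exact hfin.lt_top⟩
    have hνIci : ∀ y : ℝ, ν (Ici y) = ∫⁻ z in Ici y ∩ Ici x, g z ∂μ := fun y => by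
      rw [hν, withDensity_apply _ measurableSet_Ici, Measure.restrict_restrict measurableSet_Ici]
    have htail := tail_rpow_lintegral_ge ν (q := p - 1) (by linarith)
    have hmeas : Measurable fun y : ℝ => ν (Ici y) ^ (p - 1) := by
      have : Antitone fun y : ℝ => ν (Ici y) ^ (p - 1) := fun s t hst =>
        ENNReal.rpow_le_rpow (measure_mono (Ici_subset_Ici.2 hst)) (by linarith)
      exact this.measurable
    have hlint : ∫⁻ y, ν (Ici y) ^ (p - 1) ∂ν
        = ∫⁻ y in Ici x, g y * ν (Ici y) ^ (p - 1) ∂μ := by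
      rw [hν, lintegral_withDensity_eq_lintegral_mul _ hg hmeas]
      rfl
    have hcongr : ∫⁻ y in Ici x, g y * ν (Ici y) ^ (p - 1) ∂μ
        = ∫⁻ y in Ici x, g y * (∫⁻ z in Ici y, g z ∂μ) ^ (p - 1) ∂μ := by
      refine setLIntegral_congr_fun measurableSet_Ici
        (fun y hy => ?_)
      rw [hνIci y, inter_eq_left.2 (Ici_subset_Ici.2 hy)]
    have hp1 : p - 1 + 1 = p := by ring
    calc (∫⁻ y in Ici x, g y ∂μ) ^ p = ν univ ^ (p - 1 + 1) := by rw [hνuniv, hp1]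
      _ ≤ ENNReal.ofReal (p - 1 + 1) * ∫⁻ y, ν (Ici y) ^ (p - 1) ∂ν := htail
      _ = ENNReal.ofReal p * ∫⁻ y in Ici x, g y * (∫⁻ z in Ici y, g z ∂μ) ^ (p - 1) ∂μ := by
          rw [hp1, hlint, hcongr]

lemma swap_lemma (μ : Measure ℝ) [SFinite μ] (h : ℝ → ℝ≥0∞) (hh : Measurable h) :
    ∫⁻ x, ∫⁻ y in Ici x, h y ∂μ ∂μ = ∫⁻ y, h y * μ (Iic y) ∂μ := by
  have hk : Measurable fun z : ℝ × ℝ => if z.1 ≤ z.2 then h z.2 else 0 :=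
    Measurable.ite (measurableSet_le measurable_fst measurable_snd) (hh.comp measurable_snd)
      measurable_const
  calc ∫⁻ x, ∫⁻ y in Ici x, h y ∂μ ∂μ
      = ∫⁻ x, ∫⁻ y, (if x ≤ y then h y else 0) ∂μ ∂μ := by
        refine lintegral_congr fun x => ?_
        rw [← lintegral_indicator measurableSet_Ici]
        refine lintegral_congr fun y => ?_
        simp only [indicator_apply, mem_Ici]
    _ = ∫⁻ y, ∫⁻ x, (if x ≤ y then h y else 0) ∂μ ∂μ :=
        lintegral_lintegral_swap hk.aemeasurable
    _ = ∫⁻ y, h y * μ (Iic y) ∂μ := by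
        refine lintegral_congr fun y => ?_
        have : (fun x : ℝ => if x ≤ y then h y else 0) = (Iic y).indicator fun _ => h y := by
          ext x; simp [indicator_apply, mem_Iic]
        rw [this, lintegral_indicator measurableSet_Iic, setLIntegral_const]

/-- The Copson inequality for a truncated (bounded-kernel) weight. -/
lemma bounded_case (μ : Measure ℝ) [IsProbabilityMeasure μ] {p : ℝ} (hp : 1 < p)
    (φ : ℝ → ℝ≥0∞) (hφ : Measurable φ) (C : ℝ≥0∞) (hC : C ≠ ∞)
    (hgC : ∀ y, φ y / μ (Iic y) ≤ C)
    (hcancel : ∀ y, φ y / μ (Iic y) * μ (Iic y) = φ y) :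
    ∫⁻ x, (∫⁻ y in Ici x, φ y / μ (Iic y) ∂μ) ^ p ∂μ
      ≤ ENNReal.ofReal (p ^ p) * ∫⁻ y, φ y ^ p ∂μ := by
  have hppos : (0:ℝ) < p := by linarith
  set F : ℝ → ℝ≥0∞ := fun y => μ (Iic y) with hF
  have hFmeas : Measurable F :=
    Monotone.measurable fun a b hab => measure_mono (Iic_subset_Iic.2 hab)
  set g : ℝ → ℝ≥0∞ := fun y => φ y / F y with hg
  have hgmeas : Measurable g := hφ.div hFmeas
  set T : ℝ → ℝ≥0∞ := fun x => ∫⁻ y in Ici x, g y ∂μ with hT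
  have hTanti : Antitone T := fun a b hab => lintegral_mono_set (Ici_subset_Ici.2 hab)
  have hTmeas : Measurable T := hTanti.measurable
  have hTbound : ∀ x, T x ≤ C := fun x => by
    calc T x ≤ ∫⁻ _ in Ici x, C ∂μ := lintegral_mono fun y => hgC y
      _ = C * μ (Ici x) := setLIntegral_const _ _
      _ ≤ C * 1 := mul_le_mul_right prob_le_one _
      _ = C := mul_one _
  have hTfin : ∀ x, T x ≠ ∞ := fun x => ((hTbound x).trans_lt hC.lt_top).ne
  have hTp_anti : Antitone fun y : ℝ => T y ^ (p - 1) := fun a b hab =>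
    ENNReal.rpow_le_rpow (hTanti hab) (by linarith)
  have hTp_meas : Measurable fun y : ℝ => T y ^ (p - 1) := hTp_anti.measurable
  set I := ∫⁻ x, T x ^ p ∂μ with hI
  set J := ∫⁻ y, φ y ^ p ∂μ with hJ
  have hIfin : I ≠ ∞ := by
    have : I ≤ C ^ p := by
      calc I ≤ ∫⁻ _ : ℝ, C ^ p ∂μ :=
            lintegral_mono fun x => ENNReal.rpow_le_rpow (hTbound x) hppos.le
        _ = C ^ p := by rw [lintegral_const, measure_univ, mul_one]
    exact (this.trans_lt (ENNReal.rpow_ne_top_of_nonneg hppos.le hC).lt_top).ne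
  -- Step 1 : I ≤ p * ∫ φ * T^(p-1)
  have step1 : I ≤ ENNReal.ofReal p * ∫⁻ y, φ y * T y ^ (p - 1) ∂μ := by
    calc I ≤ ∫⁻ x, ENNReal.ofReal p *
          (∫⁻ y in Ici x, g y * T y ^ (p - 1) ∂μ) ∂μ :=
          lintegral_mono fun x => lemmaA μ g hgmeas hp.le x (hTfin x)
      _ = ENNReal.ofReal p * ∫⁻ x, ∫⁻ y in Ici x, g y * T y ^ (p - 1) ∂μ ∂μ :=
          lintegral_const_mul' _ _ ENNReal.ofReal_ne_top
      _ = ENNReal.ofReal p * ∫⁻ y, (g y * T y ^ (p - 1)) * F y ∂μ := by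
          rw [swap_lemma μ (fun y => g y * T y ^ (p - 1)) (hgmeas.mul hTp_meas)]
      _ = ENNReal.ofReal p * ∫⁻ y, φ y * T y ^ (p - 1) ∂μ := by
          congr 1
          refine lintegral_congr fun y => ?_
          rw [mul_right_comm, hcancel y]
  -- Step 2 : Hölder
  have hpq : p.HolderConjugate (p / (p - 1)) := Real.HolderConjugate.conjExponent hp
  have holder := ENNReal.lintegral_mul_le_Lp_mul_Lq μ hpq hφ.aemeasurable hTp_meas.aemeasurable
  have hTpp : ∀ y : ℝ, (T y ^ (p - 1)) ^ (p / (p - 1)) = T y ^ p := fun y => by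
    rw [← ENNReal.rpow_mul]
    congr 1
    have hp1 : p - 1 ≠ 0 := sub_ne_zero.2 (ne_of_gt hp)
    field_simp
  have step2 : ∫⁻ y, φ y * T y ^ (p - 1) ∂μ ≤ J ^ (1/p) * I ^ ((p-1)/p) := by
    calc ∫⁻ y, φ y * T y ^ (p - 1) ∂μ
        = ∫⁻ y, (φ * fun y => T y ^ (p - 1)) y ∂μ := rfl
      _ ≤ (∫⁻ y, φ y ^ p ∂μ) ^ (1/p) *
            (∫⁻ y, (T y ^ (p - 1)) ^ (p / (p - 1)) ∂μ) ^ (1/(p / (p - 1))) := holder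
      _ = J ^ (1/p) * I ^ ((p-1)/p) := by
          congr 2
          · exact lintegral_congr fun y => hTpp y
          · rw [one_div, inv_div]
  -- Step 3 : bootstrap
  by_cases hI0 : I = 0
  · rw [hI0]; exact zero_le
  have hIp_ne0 : I ^ ((p-1)/p) ≠ 0 := by
    simp only [ne_eq, ENNReal.rpow_eq_zero_iff, not_or]
    constructor
    · rintro ⟨h, _⟩; exact hI0 h
    · rintro ⟨h, _⟩; exact hIfin h
  have hIp_fin : I ^ ((p-1)/p) ≠ ∞ := ENNReal.rpow_ne_top_of_nonneg (div_nonneg (by linarith) hppos.le) hIfin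
  have hkey : I ^ (1/p) ≤ ENNReal.ofReal p * J ^ (1/p) := by
    rw [← ENNReal.mul_le_mul_iff_left hIp_ne0 hIp_fin]
    calc I ^ (1/p) * I ^ ((p-1)/p) = I ^ (1/p + (p-1)/p) :=
          (ENNReal.rpow_add _ _ hI0 hIfin).symm
      _ = I := by
          rw [show 1/p + (p-1)/p = 1 by field_simp; ring, ENNReal.rpow_one]
      _ ≤ ENNReal.ofReal p * (J ^ (1/p) * I ^ ((p-1)/p)) := step1.trans
          (mul_le_mul_right step2 _)
      _ = ENNReal.ofReal p * J ^ (1/p) * I ^ ((p-1)/p) := by rw [mul_assoc]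
  calc I = (I ^ (1/p)) ^ p := by
        rw [← ENNReal.rpow_mul, one_div, inv_mul_cancel₀ hppos.ne', ENNReal.rpow_one]
    _ ≤ (ENNReal.ofReal p * J ^ (1/p)) ^ p := ENNReal.rpow_le_rpow hkey hppos.le
    _ = ENNReal.ofReal (p ^ p) * J := by
        rw [ENNReal.mul_rpow_of_nonneg _ _ hppos.le, ← ENNReal.rpow_mul,
          one_div, inv_mul_cancel₀ hppos.ne', ENNReal.rpow_one,
          ENNReal.ofReal_rpow_of_pos hppos]

/-- Probabilistic Copson inequality: with `F y = μ (Iic y)` the distribution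
function of the probability measure `μ`, and `p ≥ 1`. -/
theorem probability_copson (μ : Measure ℝ) [IsProbabilityMeasure μ]
    (p : ℝ) (hp : 1 ≤ p) (ψ : ℝ → ℝ≥0∞) (hψ : Measurable ψ) :
    ∫⁻ x, (∫⁻ y in Ici x, ψ y / μ (Iic y) ∂μ) ^ p ∂μ
      ≤ ENNReal.ofReal (p ^ p) * ∫⁻ y, ψ y ^ p ∂μ := by
  have hFmeas : Measurable fun y : ℝ => μ (Iic y) :=
    Monotone.measurable fun a b hab => measure_mono (Iic_subset_Iic.2 hab)
  have hnull : μ {y : ℝ | μ (Iic y) = 0} = 0 := by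
    refine le_antisymm ?_ (zero_le)
    refine measure_lowerSet_le μ (fun a b ha hba => ?_) (fun y hy => ?_)
    · exact le_antisymm (le_trans (measure_mono (Iic_subset_Iic.2 hba)) ha.le) (zero_le)
    · exact hy.le
  have hae : ∀ᵐ y ∂μ, μ (Iic y) ≠ 0 := by
    rw [ae_iff]
    simpa using hnull
  rcases eq_or_lt_of_le hp with heq | hlt
  · -- the case p = 1
    subst heq
    simp only [ENNReal.rpow_one, Real.rpow_one, ENNReal.ofReal_one, one_mul]
    calc ∫⁻ x, ∫⁻ y in Ici x, ψ y / μ (Iic y) ∂μ ∂μ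
        = ∫⁻ y, (ψ y / μ (Iic y)) * μ (Iic y) ∂μ := swap_lemma μ _ (hψ.div hFmeas)
      _ = ∫⁻ y, ψ y ∂μ := by
          refine lintegral_congr_ae ?_
          filter_upwards [hae] with y hy
          exact ENNReal.div_mul_cancel hy (measure_ne_top μ _)
      _ ≤ ∫⁻ y, ψ y ∂μ := le_rfl
  · -- the case 1 < p
    have hppos : (0:ℝ) < p := by linarith
    set φ : ℕ → ℝ → ℝ≥0∞ := fun n y =>
      if ((n:ℝ≥0∞) + 1)⁻¹ ≤ μ (Iic y) then min (ψ y) n else 0 with hφ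
    have hφmeas : ∀ n, Measurable (φ n) := fun n =>
      Measurable.ite (hFmeas measurableSet_Ici) (hψ.min measurable_const) measurable_const
    have hφmono : Monotone φ := by
      intro m n hmn y
      simp only [hφ]
      by_cases hcond : ((m:ℝ≥0∞) + 1)⁻¹ ≤ μ (Iic y)
      · rw [if_pos hcond, if_pos (le_trans (ENNReal.inv_le_inv.2
          (add_le_add_left (Nat.cast_le.2 hmn) 1)) hcond)]
        exact min_le_min le_rfl (Nat.cast_le.2 hmn)
      · rw [if_neg hcond]
        exact zero_le
    have hφle : ∀ n y, φ n y ≤ ψ y := by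
      intro n y
      simp only [hφ]
      split
      · exact min_le_left _ _
      · exact zero_le
    have hcancel : ∀ n y, φ n y / μ (Iic y) * μ (Iic y) = φ n y := by
      intro n y
      simp only [hφ]
      split
      · rename_i hcond
        refine ENNReal.div_mul_cancel ?_ (measure_ne_top μ _)
        intro h0
        rw [h0, le_zero_iff, ENNReal.inv_eq_zero] at hcond
        exact (ENNReal.add_eq_top.1 hcond).elim (fun h => ENNReal.natCast_ne_top n h)
          (fun h => ENNReal.one_ne_top h)
      · simp
    have hgC : ∀ n y, φ n y / μ (Iic y) ≤ (n : ℝ≥0∞) * ((n:ℝ≥0∞) + 1) := by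
      intro n y
      simp only [hφ]
      split
      · rename_i hcond
        calc min (ψ y) n / μ (Iic y) ≤ (n:ℝ≥0∞) / ((n:ℝ≥0∞)+1)⁻¹ :=
              ENNReal.div_le_div (min_le_right _ _) hcond
          _ = (n:ℝ≥0∞) * ((n:ℝ≥0∞)+1) := by rw [div_eq_mul_inv, inv_inv]
      · simp only [ENNReal.zero_div]
        exact zero_le
    have hCne : ∀ n : ℕ, ((n : ℝ≥0∞) * ((n:ℝ≥0∞) + 1)) ≠ ∞ := fun n =>
      ENNReal.mul_ne_top (ENNReal.natCast_ne_top n)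
        (ENNReal.add_ne_top.2 ⟨ENNReal.natCast_ne_top n, ENNReal.one_ne_top⟩)
    have hbdd : ∀ n, ∫⁻ x, (∫⁻ y in Ici x, φ n y / μ (Iic y) ∂μ) ^ p ∂μ
        ≤ ENNReal.ofReal (p ^ p) * ∫⁻ y, φ n y ^ p ∂μ := fun n =>
      bounded_case μ hlt (φ n) (hφmeas n) _ (hCne n) (hgC n) (hcancel n)
    -- supremum of the truncations
    have hsup : ∀ᵐ y ∂μ, (⨆ n, φ n y / μ (Iic y)) = ψ y / μ (Iic y) := by
      filter_upwards [hae] with y hy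
      rw [← ENNReal.iSup_div]
      congr 1
      obtain ⟨m, hm⟩ := ENNReal.exists_inv_nat_lt hy
      have hmle : ∀ k : ℕ, m ≤ k → ((k:ℝ≥0∞) + 1)⁻¹ ≤ μ (Iic y) := fun k hk =>
        le_trans (le_trans (ENNReal.inv_le_inv.2
          (le_trans (Nat.cast_le.2 hk) le_self_add)) hm.le) le_rfl
      refine le_antisymm (iSup_le fun n => hφle n y) ?_
      rcases eq_or_ne (ψ y) ∞ with htop | hfin
      · rw [htop]
        refine le_trans (le_of_eq ENNReal.iSup_natCast.symm) (iSup_le fun k => ?_)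
        refine le_iSup_of_le (m + k) ?_
        simp only [hφ]
        rw [if_pos (hmle (m+k) (Nat.le_add_right m k)), htop]
        rw [min_eq_right le_top]
        exact Nat.cast_le.2 (Nat.le_add_left k m)
      · obtain ⟨k, hk⟩ := ENNReal.exists_nat_gt hfin
        refine le_iSup_of_le (m + k) ?_
        simp only [hφ]
        rw [if_pos (hmle (m+k) (Nat.le_add_right m k)), min_eq_left]
        exact le_trans hk.le (Nat.cast_le.2 (Nat.le_add_left k m))
    have hgmono : Monotone fun n => fun y => φ n y / μ (Iic y) := fun m n hmn y =>
      ENNReal.div_le_div (hφmono hmn y) le_rfl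
    have hTsup : ∀ x, (∫⁻ y in Ici x, ψ y / μ (Iic y) ∂μ)
        = ⨆ n, ∫⁻ y in Ici x, φ n y / μ (Iic y) ∂μ := by
      intro x
      rw [← lintegral_iSup (f := fun n y => φ n y / μ (Iic y)) (fun n => (hφmeas n).div hFmeas) hgmono]
      exact lintegral_congr_ae (ae_restrict_of_ae (hsup.mono fun y hy => hy.symm))
    have hTn_anti : ∀ n, Antitone fun x => ∫⁻ y in Ici x, φ n y / μ (Iic y) ∂μ :=
      fun n a b hab => lintegral_mono_set (Ici_subset_Ici.2 hab)
    calc ∫⁻ x, (∫⁻ y in Ici x, ψ y / μ (Iic y) ∂μ) ^ p ∂μ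
        = ∫⁻ x, ⨆ n, (∫⁻ y in Ici x, φ n y / μ (Iic y) ∂μ) ^ p ∂μ := by
          refine lintegral_congr fun x => ?_
          rw [hTsup x]
          exact (ENNReal.orderIsoRpow p hppos).map_iSup _
      _ = ⨆ n, ∫⁻ x, (∫⁻ y in Ici x, φ n y / μ (Iic y) ∂μ) ^ p ∂μ :=
          lintegral_iSup
            (fun n => Antitone.measurable
              (f := fun x => (∫⁻ y in Ici x, φ n y / μ (Iic y) ∂μ) ^ p)
              (fun a b hab => ENNReal.rpow_le_rpow (hTn_anti n hab) hppos.le))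
            (fun m n hmn x => ENNReal.rpow_le_rpow
              (lintegral_mono fun y => hgmono hmn y) hppos.le)
      _ ≤ ENNReal.ofReal (p ^ p) * ∫⁻ y, ψ y ^ p ∂μ := iSup_le fun n =>
          (hbdd n).trans (mul_le_mul_right (lintegral_mono fun y =>
            ENNReal.rpow_le_rpow (hφle n y) hppos.le) _)
end

section
/- Let $a_1,\dots,a_m$ and $p_1,\dots,p_m$ be nonnegative reals with $p_1>0$, and let $p>1$. Then $\sum_{n=1}^m\left(\sum_{i=n}^m \frac{a_i p_i}{\sum_{j=1}^i p_j}\right)^p p_n \le p^p \sum_{n=1}^m a_n^p p_n$. -/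
open Finset

private lemma copson_rpow_convex {p x y : ℝ} (hp : 1 ≤ p) (hy : 0 ≤ y) (hxy : y ≤ x) :
    x ^ p - y ^ p ≤ p * x ^ (p - 1) * (x - y) := by
  have hx : 0 ≤ x := hy.trans hxy
  rcases hx.eq_or_lt with hx0 | hx0
  · have hy0 : y = 0 := le_antisymm (hxy.trans_eq hx0.symm) hy
    have hp0 : p ≠ 0 := by positivity
    simp [← hx0, hy0, Real.zero_rpow hp0]
  · have hs : (-1 : ℝ) ≤ y / x - 1 := by
      have : 0 ≤ y / x := div_nonneg hy hx0.le
      linarith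
    have key := one_add_mul_self_le_rpow_one_add hs hp
    have h1 : (1 : ℝ) + (y / x - 1) = y / x := by ring
    rw [h1] at key
    have hxp : 0 < x ^ p := Real.rpow_pos_of_pos hx0 p
    have h5 := mul_le_mul_of_nonneg_right key hxp.le
    have h2 : (y / x) ^ p * x ^ p = y ^ p := by
      rw [Real.div_rpow hy hx0.le, div_mul_cancel₀ _ hxp.ne']
    rw [h2] at h5
    have h4 : p * x ^ (p - 1) * (x - y) = -(p * (y / x - 1)) * x ^ p := by
      rw [Real.rpow_sub hx0, Real.rpow_one]
      field_simp
      ring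
    rw [h4]
    nlinarith [h5]

private lemma copson_abel (f W : ℕ → ℝ) (m : ℕ) :
    ∑ n ∈ Icc 1 m, f n * (W n - W (n - 1))
      = ∑ n ∈ Icc 1 m, (f n - f (n + 1)) * W n + f (m + 1) * W m - f 1 * W 0 := by
  induction m with
  | zero => simp
  | succ k ih =>
      rw [Finset.sum_Icc_succ_top (by omega), Finset.sum_Icc_succ_top (by omega), ih]
      simp only [Nat.add_sub_cancel]
      ring

/-- Finite weighted discrete Copson inequality. -/
theorem finite_weighted_copson (m : ℕ) (p : ℝ) (hp : 1 < p) (a w : ℕ → ℝ)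
    (ha : ∀ i, 0 ≤ a i) (hw : ∀ i, 0 ≤ w i) (hw1 : 0 < w 1) :
    ∑ n ∈ Finset.Icc 1 m,
        (∑ i ∈ Finset.Icc n m, a i * w i / (∑ j ∈ Finset.Icc 1 i, w j)) ^ p * w n
      ≤ p ^ p * ∑ n ∈ Finset.Icc 1 m, a n ^ p * w n := by
  have hp0 : 0 < p := lt_trans one_pos hp
  set W : ℕ → ℝ := fun n => ∑ j ∈ Finset.Icc 1 n, w j with hWdef
  set T : ℕ → ℝ := fun n => ∑ i ∈ Finset.Icc n m, a i * w i / W i with hTdef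
  have hWnn : ∀ n, 0 ≤ W n := fun n => Finset.sum_nonneg fun j _ => hw j
  have hWpos : ∀ n, 1 ≤ n → 0 < W n := by
    intro n hn
    exact Finset.sum_pos' (fun j _ => hw j) ⟨1, Finset.mem_Icc.2 ⟨le_refl 1, hn⟩, hw1⟩
  have hWstep : ∀ k : ℕ, W (k + 1) = W k + w (k + 1) := by
    intro k
    exact Finset.sum_Icc_succ_top (by omega) w
  have hTnn : ∀ n, 0 ≤ T n :=
    fun n => Finset.sum_nonneg fun i _ => div_nonneg (mul_nonneg (ha i) (hw i)) (hWnn i)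
  have hTstep : ∀ n, n ≤ m → T n = a n * w n / W n + T (n + 1) := by
    intro n hn
    rw [hTdef]
    simp only
    rw [Finset.Icc_eq_cons_Ioc hn, Finset.sum_cons, ← Finset.Icc_add_one_left_eq_Ioc]
  have hTm : T (m + 1) = 0 := by
    rw [hTdef]
    simp only
    rw [Finset.Icc_eq_empty (by omega), Finset.sum_empty]
  have hTmono : ∀ n, n ≤ m → T (n + 1) ≤ T n := by
    intro n hn
    rw [hTstep n hn]
    have : 0 ≤ a n * w n / W n := div_nonneg (mul_nonneg (ha n) (hw n)) (hWnn n)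
    linarith
  set S := ∑ n ∈ Icc 1 m, T n ^ p * w n with hSdef
  set A := ∑ n ∈ Icc 1 m, a n ^ p * w n with hAdef
  have hSnn : 0 ≤ S :=
    Finset.sum_nonneg fun n _ => mul_nonneg (Real.rpow_nonneg (hTnn n) p) (hw n)
  have hAnn : 0 ≤ A :=
    Finset.sum_nonneg fun n _ => mul_nonneg (Real.rpow_nonneg (ha n) p) (hw n)
  -- Step 1: Abel summation
  have step1 : S = ∑ n ∈ Icc 1 m, (T n ^ p - T (n + 1) ^ p) * W n := by
    have h1 : S = ∑ n ∈ Icc 1 m, (fun n => T n ^ p) n * (W n - W (n - 1)) := by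
      apply Finset.sum_congr rfl
      intro n hn
      obtain ⟨hn1, hn2⟩ := Finset.mem_Icc.mp hn
      obtain ⟨k, rfl⟩ : ∃ k, n = k + 1 := ⟨n - 1, by omega⟩
      simp only [Nat.add_sub_cancel]
      rw [hWstep k]
      ring
    rw [h1, copson_abel (fun n => T n ^ p) W m]
    have hW0 : W 0 = 0 := by rw [hWdef]; simp
    have hfm : T (m + 1) ^ p = 0 := by rw [hTm, Real.zero_rpow hp0.ne']
    simp only [hfm, hW0]
    ring
  -- Step 2: convexity bound
  have step2 : S ≤ p * ∑ n ∈ Icc 1 m, a n * w n * T n ^ (p - 1) := by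
    rw [step1, Finset.mul_sum]
    apply Finset.sum_le_sum
    intro n hn
    obtain ⟨hn1, hn2⟩ := Finset.mem_Icc.mp hn
    have hWn : 0 < W n := hWpos n hn1
    have hconv := copson_rpow_convex hp.le (hTnn (n + 1)) (hTmono n hn2)
    have hdiff : T n - T (n + 1) = a n * w n / W n := by
      rw [hTstep n hn2]; ring
    calc (T n ^ p - T (n + 1) ^ p) * W n
        ≤ p * T n ^ (p - 1) * (T n - T (n + 1)) * W n := by
          apply mul_le_mul_of_nonneg_right hconv hWn.le
      _ = p * (a n * w n * T n ^ (p - 1)) := by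
          rw [hdiff]
          field_simp
  -- Step 3: Hölder
  set q := p / (p - 1) with hq
  have hpq : p.HolderConjugate q := by
    exact (Real.holderConjugate_iff_eq_conjExponent hp).2 hq
  have step3 : ∑ n ∈ Icc 1 m, a n * w n * T n ^ (p - 1)
      ≤ A ^ (1 / p) * S ^ (1 / q) := by
    have hH := Real.inner_le_Lp_mul_Lq_of_nonneg (s := Icc 1 m)
      (f := fun n => a n * w n ^ (1 / p))
      (g := fun n => T n ^ (p - 1) * w n ^ (1 / q)) hpq
      (fun i _ => mul_nonneg (ha i) (Real.rpow_nonneg (hw i) _))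
      (fun i _ => mul_nonneg (Real.rpow_nonneg (hTnn i) _) (Real.rpow_nonneg (hw i) _))
    have e1 : ∀ n, a n * w n ^ (1 / p) * (T n ^ (p - 1) * w n ^ (1 / q))
        = a n * w n * T n ^ (p - 1) := by
      intro n
      rw [mul_mul_mul_comm, ← Real.rpow_add' (hw n) (by
        rw [hq]; field_simp; simp [hp0.ne'])]
      have : 1 / p + 1 / q = 1 := by
        rw [one_div, one_div, hpq.inv_add_inv_eq_one]
      rw [this, Real.rpow_one]
      ring
    have e2 : ∀ n, (a n * w n ^ (1 / p)) ^ p = a n ^ p * w n := by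
      intro n
      rw [Real.mul_rpow (ha n) (Real.rpow_nonneg (hw n) _),
        ← Real.rpow_mul (hw n), one_div, inv_mul_cancel₀ hp0.ne', Real.rpow_one]
    have e3 : ∀ n, (T n ^ (p - 1) * w n ^ (1 / q)) ^ q = T n ^ p * w n := by
      intro n
      rw [Real.mul_rpow (Real.rpow_nonneg (hTnn n) _) (Real.rpow_nonneg (hw n) _),
        ← Real.rpow_mul (hTnn n), ← Real.rpow_mul (hw n), hpq.sub_one_mul_conj,
        one_div, inv_mul_cancel₀ hpq.symm.ne_zero, Real.rpow_one]
    calc ∑ n ∈ Icc 1 m, a n * w n * T n ^ (p - 1)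
        = ∑ n ∈ Icc 1 m, a n * w n ^ (1 / p) * (T n ^ (p - 1) * w n ^ (1 / q)) := by
          exact Finset.sum_congr rfl fun n _ => (e1 n).symm
      _ ≤ (∑ n ∈ Icc 1 m, (a n * w n ^ (1 / p)) ^ p) ^ (1 / p) *
          (∑ n ∈ Icc 1 m, (T n ^ (p - 1) * w n ^ (1 / q)) ^ q) ^ (1 / q) := hH
      _ = A ^ (1 / p) * S ^ (1 / q) := by
          rw [hAdef, hSdef]
          congr 1
          · congr 1
            exact Finset.sum_congr rfl fun n _ => e2 n
          · congr 1
            exact Finset.sum_congr rfl fun n _ => e3 n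
  -- Step 4: combine
  have main : S ≤ p * (A ^ (1 / p) * S ^ (1 / q)) :=
    step2.trans (by
      apply mul_le_mul_of_nonneg_left step3 hp0.le)
  rcases hSnn.eq_or_lt with hS0 | hS0
  · rw [← hS0]
    positivity
  · have hSq : 0 < S ^ (1 / q) := Real.rpow_pos_of_pos hS0 _
    have hsplit : S = S ^ (1 / p) * S ^ (1 / q) := by
      rw [← Real.rpow_add hS0]
      rw [show 1 / p + 1 / q = 1 by rw [one_div, one_div, hpq.inv_add_inv_eq_one]]
      rw [Real.rpow_one]
    have h6 : S ^ (1 / p) * S ^ (1 / q) ≤ p * A ^ (1 / p) * S ^ (1 / q) := by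
      rw [← hsplit, mul_assoc]; exact main
    have h7 : S ^ (1 / p) ≤ p * A ^ (1 / p) := le_of_mul_le_mul_right h6 hSq
    have h8 := Real.rpow_le_rpow (Real.rpow_nonneg hSnn _) h7 hp0.le
    rw [← Real.rpow_mul hSnn, one_div, inv_mul_cancel₀ hp0.ne', Real.rpow_one] at h8
    rw [Real.mul_rpow hp0.le (Real.rpow_nonneg hAnn _), ← Real.rpow_mul hAnn,
      inv_mul_cancel₀ hp0.ne', Real.rpow_one] at h8
    exact h8
end
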